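/- Let E be a real inner product space, let J : E → ℝ be L-smooth with L > 0, and suppose J(x) ≤ J* for all x ∈ E. Fix T ≥ 1 and set the constant step size η = 1/(L√T). Let (Ω, 𝔽, P) be a probability space with a filtration (𝔽_t)_{t≥0}, let θ_0 ∈ E be deterministic, and let (ĝ_t)_{t=0}^{T−1} be square-integrable E-valued random vectors such that, with θ_{t+1} = θ_t + η·ĝ_t, each θ_t is 𝔽_t-measurable, E[ĝ_t | 𝔽_t] = ∇J(θ_t), and E[‖ĝ_t − ∇J(θ_t)‖² | 𝔽_t] ≤ σ² almost surely for all 0 ≤ t < T. Then, with Δ = J* − J(θ_0), the averaged expected squared gradient norm satisfies (1/T)·∑_{t=0}^{T−1} E[‖∇J(θ_t)‖²] ≤ 2LΔ/√T + σ²/√T. -/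

import Mathlib

open MeasureTheory ProbabilityTheory
open scoped RealInnerProductSpace

lemma descent_lemma {E : Type*} [NormedAddCommGroup E] [InnerProductSpace ℝ E] [CompleteSpace E]
    (J : E → ℝ) (gradJ : E → E) (L : ℝ) (hL : 0 ≤ L)
    (hdiff : ∀ x, HasGradientAt J (gradJ x) x)
    (hlip : ∀ x y, ‖gradJ x - gradJ y‖ ≤ L * ‖x - y‖) (x v : E) :
    |J (x + v) - J x - ⟪gradJ x, v⟫| ≤ L / 2 * ‖v‖ ^ 2 := by
  set f : ℝ → ℝ := fun t => J (x + t • v) - J x - t * ⟪gradJ x, v⟫ with hf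
  set f' : ℝ → ℝ := fun t => ⟪gradJ (x + t • v) - gradJ x, v⟫ with hf'
  have hline : ∀ t : ℝ, HasDerivAt (fun s : ℝ => x + s • v) v t := by
    intro t
    simpa using ((hasDerivAt_id t).smul_const v).const_add x
  have hderiv : ∀ t : ℝ, HasDerivAt f (f' t) t := by
    intro t
    have h1 : HasDerivAt (fun s : ℝ => J (x + s • v)) ⟪gradJ (x + t • v), v⟫ t := by
      have := (hdiff (x + t • v)).hasFDerivAt.comp_hasDerivAt t (hline t)
      exact this
    have h2 : HasDerivAt (fun s : ℝ => J x + s * ⟪gradJ x, v⟫) ⟪gradJ x, v⟫ t := by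
      simpa using ((hasDerivAt_id t).mul_const ⟪gradJ x, v⟫).const_add (J x)
    have h3 := h1.sub h2
    simp only [hf, hf', inner_sub_left, sub_sub]
    exact h3
  have key : ∀ u ∈ Set.Icc (0:ℝ) 1, ‖f u‖ ≤ L / 2 * ‖v‖ ^ 2 * u ^ 2 := by
    refine image_norm_le_of_norm_deriv_right_le_deriv_boundary
      (f := f) (f' := f') (B := fun t => L / 2 * ‖v‖ ^ 2 * t ^ 2)
      (B' := fun t => L * ‖v‖ ^ 2 * t)
      (fun t _ => (hderiv t).continuousAt.continuousWithinAt)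
      (fun t _ => (hderiv t).hasDerivWithinAt) (by simp [hf]) (fun t => ?_) ?_
    · have := (hasDerivAt_pow 2 t).const_mul (L / 2 * ‖v‖ ^ 2)
      rw [show L * ‖v‖ ^ 2 * t = L / 2 * ‖v‖ ^ 2 * ((2:ℕ) * t ^ (2 - 1)) by norm_num; ring]
      exact this
    · intro t ht
      have h1 : ‖f' t‖ ≤ ‖gradJ (x + t • v) - gradJ x‖ * ‖v‖ := by
        simpa [hf', Real.norm_eq_abs] using abs_real_inner_le_norm _ v
      have h2 : ‖gradJ (x + t • v) - gradJ x‖ ≤ L * (t * ‖v‖) := by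
        have := hlip (x + t • v) x
        simpa [norm_smul, Real.norm_eq_abs, abs_of_nonneg ht.1] using this
      calc ‖f' t‖ ≤ L * (t * ‖v‖) * ‖v‖ :=
            h1.trans (by gcongr)
        _ = L * ‖v‖ ^ 2 * t := by ring
  have := key 1 (by norm_num)
  simpa [hf, Real.norm_eq_abs] using this

lemma condExpL2_ae_eq_condexp' {Ω : Type*} {m mΩ : MeasurableSpace Ω} {μ : Measure Ω}
    [IsProbabilityMeasure μ] (hm : m ≤ mΩ)
    {E : Type*} [NormedAddCommGroup E] [InnerProductSpace ℝ E] [CompleteSpace E]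
    (g : Ω → E) (hg : MemLp g 2 μ) :
    (condExpL2 E ℝ hm (hg.toLp g) : Ω → E) =ᵐ[μ] μ[g | m] := by
  refine ae_eq_condExp_of_forall_setIntegral_eq hm (hg.integrable one_le_two) ?_ ?_ ?_
  · exact fun s _ _ => integrableOn_condExpL2_of_measure_ne_top hm (measure_ne_top μ s) _
  · intro s hs _
    rw [integral_condExpL2_eq hm (hg.toLp g) hs (measure_ne_top μ s)]
    exact setIntegral_congr_ae (hm s hs) (hg.coeFn_toLp.mono fun ω h _ => h)
  · exact aestronglyMeasurable_condExpL2 hm _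

lemma integral_inner_condexp {Ω : Type*} {m mΩ : MeasurableSpace Ω} {μ : Measure Ω}
    [IsProbabilityMeasure μ] (hm : m ≤ mΩ)
    {E : Type*} [NormedAddCommGroup E] [InnerProductSpace ℝ E] [CompleteSpace E]
    (f g : Ω → E) (hf : MemLp f 2 μ) (hg : MemLp g 2 μ)
    (hfm : AEStronglyMeasurable[m] f μ) :
    ∫ ω, ⟪f ω, g ω⟫ ∂μ = ∫ ω, ⟪f ω, (μ[g | m]) ω⟫ ∂μ := by
  set F := hf.toLp f
  set G := hg.toLp g
  have hFm : AEStronglyMeasurable[m] (F : Ω → E) μ := hfm.congr hf.coeFn_toLp.symm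
  have h1 : (inner ℝ ((condExpL2 E ℝ hm G : Ω →₂[μ] E)) F : ℝ) = inner ℝ G F :=
    inner_condExpL2_eq_inner_fun hm G F hFm
  rw [L2.inner_def, L2.inner_def] at h1
  have hce := condExpL2_ae_eq_condexp' hm g hg
  calc ∫ ω, ⟪f ω, g ω⟫ ∂μ = ∫ ω, ⟪(G : Ω → E) ω, (F : Ω → E) ω⟫ ∂μ := by
        refine integral_congr_ae ?_
        filter_upwards [hf.coeFn_toLp, hg.coeFn_toLp] with ω h1 h2
        rw [h1, h2, real_inner_comm]
    _ = ∫ ω, ⟪(condExpL2 E ℝ hm G : Ω → E) ω, (F : Ω → E) ω⟫ ∂μ := h1.symm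
    _ = ∫ ω, ⟪f ω, (μ[g | m]) ω⟫ ∂μ := by
        refine integral_congr_ae ?_
        filter_upwards [hf.coeFn_toLp, hce] with ω h1 h2
        rw [h1, h2, real_inner_comm]

lemma integrable_inner_of_memℒp {Ω : Type*} {mΩ : MeasurableSpace Ω} {μ : Measure Ω}
    {E : Type*} [NormedAddCommGroup E] [InnerProductSpace ℝ E]
    {f h : Ω → E} (hf : MemLp f 2 μ) (hh : MemLp h 2 μ) :
    Integrable (fun ω => ⟪f ω, h ω⟫) μ := by
  have := L2.integrable_inner (𝕜 := ℝ) (hf.toLp f) (hh.toLp h)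
  refine this.congr ?_
  filter_upwards [hf.coeFn_toLp, hh.coeFn_toLp] with ω h1 h2
  rw [h1, h2]

lemma integrable_norm_sq_of_memℒp {Ω : Type*} {mΩ : MeasurableSpace Ω} {μ : Measure Ω}
    {E : Type*} [NormedAddCommGroup E] [InnerProductSpace ℝ E]
    {f : Ω → E} (hf : MemLp f 2 μ) :
    Integrable (fun ω => ‖f ω‖ ^ 2) μ := by
  have := integrable_inner_of_memℒp hf hf
  refine this.congr (Filter.Eventually.of_forall fun ω => ?_)
  simpa using real_inner_self_eq_norm_sq (f ω)

set_option maxHeartbeats 2000000 in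
/-- **Convergence bound of stochastic gradient ascent for L-smooth objectives
(averaged form).** Let `J : E → ℝ` be `L`-smooth (`L > 0`) and bounded above by `J*`,
fix `T ≥ 1` and the step size `η = 1/(L√T)`. Starting from a deterministic `θ₀`, perform
updates `θ_{t+1} = θ_t + η·ĝ_t`, where each `θ_t` is `𝔽_t`-measurable, each `ĝ_t` is
square-integrable, conditionally unbiased `E[ĝ_t | 𝔽_t] = ∇J(θ_t)`, and has conditional
variance bounded by `σ²` a.s. Then, with `Δ = J* − J(θ₀)`,
`(1/T) ∑_{t<T} E[‖∇J(θ_t)‖²] ≤ 2LΔ/√T + σ²/√T`. -/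
theorem sgd_convergence_bound_avg
    {Ω : Type*} {mΩ : MeasurableSpace Ω} {μ : Measure Ω} [IsProbabilityMeasure μ]
    (ℱ : Filtration ℕ mΩ)
    {E : Type*} [NormedAddCommGroup E] [InnerProductSpace ℝ E] [CompleteSpace E]
    (J : E → ℝ) (gradJ : E → E) (L : ℝ) (hL : 0 < L)
    (hdiff : ∀ x, HasGradientAt J (gradJ x) x)
    (hlip : ∀ x y, ‖gradJ x - gradJ y‖ ≤ L * ‖x - y‖)
    (Jstar : ℝ) (hbound : ∀ x, J x ≤ Jstar)
    (T : ℕ) (hT : 1 ≤ T)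
    (η : ℝ) (hη : η = 1 / (L * Real.sqrt T))
    (θ₀ : E) (θ : ℕ → Ω → E) (g : ℕ → Ω → E) (σ2 : ℝ)
    (hθ0 : θ 0 = fun _ => θ₀)
    (hθsucc : ∀ t ω, θ (t + 1) ω = θ t ω + η • g t ω)
    (hadapted : ∀ t, StronglyMeasurable[ℱ t] (θ t))
    (hgL2 : ∀ t, MemLp (g t) 2 μ)
    (hmean : ∀ t < T, μ[g t | ℱ t] =ᵐ[μ] fun ω => gradJ (θ t ω))
    (hvar : ∀ t < T,
      ∀ᵐ ω ∂μ, (μ[(fun ω' => ‖g t ω' - gradJ (θ t ω')‖ ^ 2) | ℱ t]) ω ≤ σ2) :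
    (1 / (T : ℝ)) * ∑ t ∈ Finset.range T, ∫ ω, ‖gradJ (θ t ω)‖ ^ 2 ∂μ
      ≤ 2 * L * (Jstar - J θ₀) / Real.sqrt T + σ2 / Real.sqrt T := by
  -- basic positivity facts
  have hT0 : (0:ℝ) < T := by exact_mod_cast Nat.lt_of_lt_of_le Nat.zero_lt_one hT
  set s : ℝ := Real.sqrt T with hs_def
  have hs : 0 < s := Real.sqrt_pos.mpr hT0
  have hss : s * s = T := Real.mul_self_sqrt hT0.le
  have hs1 : 1 ≤ s := by
    rw [hs_def]
    have : (1:ℝ) ≤ T := by exact_mod_cast hT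
    simpa using Real.sqrt_le_sqrt this
  have hηpos : 0 < η := by rw [hη]; positivity
  have hLη : L * η = 1 / s := by rw [hη]; field_simp
  -- continuity of gradJ
  have hgradLip : LipschitzWith L.toNNReal gradJ := by
    refine LipschitzWith.of_dist_le_mul fun x y => ?_
    simpa [dist_eq_norm, Real.coe_toNNReal L hL.le] using hlip x y
  have hcont : Continuous gradJ := hgradLip.continuous
  have hJcont : Continuous J := by
    refine continuous_iff_continuousAt.mpr fun x => ?_
    exact (hdiff x).hasFDerivAt.continuousAt
  -- measurability and ℒ² facts
  have hθmeas : ∀ t, AEStronglyMeasurable (θ t) μ :=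
    fun t => ((hadapted t).mono (ℱ.le t)).aestronglyMeasurable
  have hθL2 : ∀ t, MemLp (θ t) 2 μ := by
    intro t
    induction t with
    | zero => rw [hθ0]; exact memLp_const θ₀
    | succ n ih =>
      have : θ (n+1) = fun ω => θ n ω + η • g n ω := funext (hθsucc n)
      rw [this]
      exact ih.add ((hgL2 n).const_smul η)
  set X : ℕ → Ω → E := fun t ω => gradJ (θ t ω) with hX_def
  have hXsm : ∀ t, StronglyMeasurable[ℱ t] (X t) :=
    fun t => hcont.comp_stronglyMeasurable (hadapted t)
  have hXL2 : ∀ t, MemLp (X t) 2 μ := by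
    intro t
    have hXm : AEStronglyMeasurable (X t) μ := ((hXsm t).mono (ℱ.le t)).aestronglyMeasurable
    have hq : MemLp (fun ω => ‖gradJ θ₀‖ + L * ‖θ t ω - θ₀‖) 2 μ :=
      (memLp_const (‖gradJ θ₀‖)).add ((((hθL2 t).sub (memLp_const θ₀)).norm).const_mul (𝕜 := ℝ) L)
    refine MemLp.of_le hq hXm (Filter.Eventually.of_forall fun ω => ?_)
    have h1 : ‖X t ω‖ ≤ ‖gradJ θ₀‖ + ‖gradJ (θ t ω) - gradJ θ₀‖ := by
      simpa [hX_def] using norm_le_insert' (gradJ (θ t ω)) (gradJ θ₀)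
    have h2 := hlip (θ t ω) θ₀
    have h3 : ‖X t ω‖ ≤ ‖gradJ θ₀‖ + L * ‖θ t ω - θ₀‖ := by linarith
    exact h3.trans (le_abs_self _)
  -- integrability of J ∘ θ t
  have hJint : ∀ t, Integrable (fun ω => J (θ t ω)) μ := by
    intro t
    have hmeasJ : AEStronglyMeasurable (fun ω => J (θ t ω)) μ :=
      hJcont.comp_aestronglyMeasurable (hθmeas t)
    have hbnd : Integrable (fun ω =>
        |J θ₀| + ‖gradJ θ₀‖ * ‖θ t ω - θ₀‖ + L / 2 * ‖θ t ω - θ₀‖ ^ 2) μ := by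
      have h1 : Integrable (fun ω => ‖θ t ω - θ₀‖) μ :=
        (((hθL2 t).sub (memLp_const θ₀)).norm).integrable one_le_two
      have h2 : Integrable (fun ω => ‖θ t ω - θ₀‖ ^ 2) μ :=
        integrable_norm_sq_of_memℒp ((hθL2 t).sub (memLp_const θ₀))
      exact ((integrable_const _).add (h1.const_mul _)).add (h2.const_mul _)
    refine hbnd.mono' hmeasJ (Filter.Eventually.of_forall fun ω => ?_)
    have hd := descent_lemma J gradJ L hL.le hdiff hlip θ₀ (θ t ω - θ₀)
    rw [add_sub_cancel] at hd
    have hip : |⟪gradJ θ₀, θ t ω - θ₀⟫| ≤ ‖gradJ θ₀‖ * ‖θ t ω - θ₀‖ :=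
      abs_real_inner_le_norm _ _
    have habs := abs_sub_abs_le_abs_sub (J (θ t ω)) (J θ₀ + ⟪gradJ θ₀, θ t ω - θ₀⟫)
    have : |J (θ t ω)| ≤ |J θ₀ + ⟪gradJ θ₀, θ t ω - θ₀⟫| + L / 2 * ‖θ t ω - θ₀‖ ^ 2 := by
      have h := hd
      rw [sub_sub] at h
      have := abs_sub_abs_le_abs_sub (J (θ t ω)) (J θ₀ + ⟪gradJ θ₀, θ t ω - θ₀⟫)
      linarith [this.trans h]
    calc ‖J (θ t ω)‖ = |J (θ t ω)| := rfl
      _ ≤ |J θ₀ + ⟪gradJ θ₀, θ t ω - θ₀⟫| + L / 2 * ‖θ t ω - θ₀‖ ^ 2 := this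
      _ ≤ |J θ₀| + ‖gradJ θ₀‖ * ‖θ t ω - θ₀‖ + L / 2 * ‖θ t ω - θ₀‖ ^ 2 := by
          have := (abs_add_le (J θ₀) ⟪gradJ θ₀, θ t ω - θ₀⟫)
          linarith
  -- abbreviations
  set A : ℕ → ℝ := fun t => ∫ ω, ‖X t ω‖ ^ 2 ∂μ with hA_def
  have hA_nonneg : ∀ t, 0 ≤ A t := fun t => integral_nonneg fun ω => sq_nonneg _
  -- orthogonality: ∫ ⟪X t, g t⟫ = A t for t < T
  have hortho : ∀ t < T, ∫ ω, ⟪X t ω, g t ω⟫ ∂μ = A t := by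
    intro t ht
    have h1 := integral_inner_condexp (ℱ.le t) (X t) (g t) (hXL2 t) (hgL2 t)
      ((hXsm t).aestronglyMeasurable)
    rw [h1]
    have h2 : ∀ᵐ ω ∂μ, ⟪X t ω, (μ[g t | ℱ t]) ω⟫ = ‖X t ω‖ ^ 2 := by
      filter_upwards [hmean t ht] with ω hω
      rw [hω]
      exact real_inner_self_eq_norm_sq _
    rw [hA_def]
    exact integral_congr_ae h2
  -- variance bound: ∫ ‖g t − X t‖² ≤ σ2 for t < T
  have hvarint : ∀ t < T, ∫ ω, ‖g t ω - X t ω‖ ^ 2 ∂μ ≤ σ2 := by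
    intro t ht
    have hint : Integrable (fun ω => ‖g t ω - X t ω‖ ^ 2) μ :=
      integrable_norm_sq_of_memℒp ((hgL2 t).sub (hXL2 t))
    have h1 := integral_condExp (μ := μ) (f := fun ω => ‖g t ω - X t ω‖ ^ 2) (ℱ.le t)
    rw [← h1]
    have h2 : ∫ ω, (μ[(fun ω' => ‖g t ω' - X t ω'‖ ^ 2) | ℱ t]) ω ∂μ ≤ ∫ _, σ2 ∂μ :=
      integral_mono_ae integrable_condExp (integrable_const _) (hvar t ht)
    simpa using h2
  -- E‖g t‖² ≤ A t + σ2 for t < T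
  have hgsq : ∀ t < T, ∫ ω, ‖g t ω‖ ^ 2 ∂μ ≤ A t + σ2 := by
    intro t ht
    have hid : ∀ ω, ‖g t ω‖ ^ 2 =
        2 * ⟪X t ω, g t ω⟫ - ‖X t ω‖ ^ 2 + ‖g t ω - X t ω‖ ^ 2 := by
      intro ω
      have := norm_sub_sq_real (g t ω) (X t ω)
      rw [real_inner_comm] at this
      linarith
    have hInt1 : Integrable (fun ω => ⟪X t ω, g t ω⟫) μ :=
      integrable_inner_of_memℒp (hXL2 t) (hgL2 t)
    have hInt2 : Integrable (fun ω => ‖X t ω‖ ^ 2) μ := integrable_norm_sq_of_memℒp (hXL2 t)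
    have hInt3 : Integrable (fun ω => ‖g t ω - X t ω‖ ^ 2) μ :=
      integrable_norm_sq_of_memℒp ((hgL2 t).sub (hXL2 t))
    calc ∫ ω, ‖g t ω‖ ^ 2 ∂μ
        = ∫ ω, (2 * ⟪X t ω, g t ω⟫ - ‖X t ω‖ ^ 2 + ‖g t ω - X t ω‖ ^ 2) ∂μ :=
          integral_congr_ae (Filter.Eventually.of_forall hid)
      _ = 2 * (∫ ω, ⟪X t ω, g t ω⟫ ∂μ) - A t + ∫ ω, ‖g t ω - X t ω‖ ^ 2 ∂μ := by
          have hIa : Integrable (fun ω => 2 * ⟪X t ω, g t ω⟫) μ := hInt1.const_mul 2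
          have hIb : Integrable (fun ω => 2 * ⟪X t ω, g t ω⟫ - ‖X t ω‖ ^ 2) μ := hIa.sub hInt2
          rw [integral_add hIb hInt3, integral_sub hIa hInt2, MeasureTheory.integral_const_mul]
      _ = 2 * A t - A t + ∫ ω, ‖g t ω - X t ω‖ ^ 2 ∂μ := by rw [hortho t ht]
      _ ≤ 2 * A t - A t + σ2 := by linarith [hvarint t ht]
      _ = A t + σ2 := by ring
  -- per-step inequality
  have hstep : ∀ t < T, ∫ ω, J (θ t ω) ∂μ + (η - L * η ^ 2 / 2) * A t - L * η ^ 2 / 2 * σ2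
      ≤ ∫ ω, J (θ (t+1) ω) ∂μ := by
    intro t ht
    have hpt : ∀ ω, J (θ t ω) + η * ⟪X t ω, g t ω⟫ - L / 2 * η ^ 2 * ‖g t ω‖ ^ 2
        ≤ J (θ (t+1) ω) := by
      intro ω
      have hd := descent_lemma J gradJ L hL.le hdiff hlip (θ t ω) (η • g t ω)
      rw [← hθsucc t ω] at hd
      have h1 : ⟪gradJ (θ t ω), η • g t ω⟫ = η * ⟪X t ω, g t ω⟫ := real_inner_smul_right _ _ _
      have h2 : ‖η • g t ω‖ ^ 2 = η ^ 2 * ‖g t ω‖ ^ 2 := by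
        rw [norm_smul, mul_pow, Real.norm_eq_abs, sq_abs]
      rw [abs_le] at hd
      have := hd.1
      rw [h1] at this
      nlinarith [this, sq_nonneg η]
    have hInt1 : Integrable (fun ω => ⟪X t ω, g t ω⟫) μ :=
      integrable_inner_of_memℒp (hXL2 t) (hgL2 t)
    have hInt3 : Integrable (fun ω => ‖g t ω‖ ^ 2) μ := integrable_norm_sq_of_memℒp (hgL2 t)
    have hIa : Integrable (fun ω => η * ⟪X t ω, g t ω⟫) μ := hInt1.const_mul η
    have hIb : Integrable (fun ω => J (θ t ω) + η * ⟪X t ω, g t ω⟫) μ := (hJint t).add hIa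
    have hIc : Integrable (fun ω => L / 2 * η ^ 2 * ‖g t ω‖ ^ 2) μ := hInt3.const_mul _
    have hIntLHS : Integrable (fun ω =>
        J (θ t ω) + η * ⟪X t ω, g t ω⟫ - L / 2 * η ^ 2 * ‖g t ω‖ ^ 2) μ := hIb.sub hIc
    have hmono := integral_mono hIntLHS (hJint (t+1)) hpt
    rw [integral_sub hIb hIc, integral_add (hJint t) hIa, MeasureTheory.integral_const_mul,
      MeasureTheory.integral_const_mul, hortho t ht] at hmono
    have hg2 := hgsq t ht
    have hc0 : (0:ℝ) ≤ L / 2 * η ^ 2 := by positivity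
    have hmul := mul_le_mul_of_nonneg_left hg2 hc0
    nlinarith [hmono, hmul]
  -- telescoping
  have htel : ∀ n, n ≤ T → J θ₀ + (η - L * η ^ 2 / 2) * (∑ t ∈ Finset.range n, A t)
      - n * (L * η ^ 2 / 2 * σ2) ≤ ∫ ω, J (θ n ω) ∂μ := by
    intro n
    induction n with
    | zero =>
      intro _
      simp [hθ0]
    | succ m ih =>
      intro hm
      have hmT : m < T := Nat.lt_of_succ_le hm
      have h1 := ih (Nat.le_of_lt hmT)
      have h2 := hstep m hmT
      rw [Finset.sum_range_succ]
      push_cast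
      nlinarith [h1, h2]
  -- conclude
  have hJT : ∫ ω, J (θ T ω) ∂μ ≤ Jstar := by
    have := integral_mono (hJint T) (integrable_const Jstar)
      (fun ω => hbound (θ T ω))
    simpa using this
  have hS_nonneg : 0 ≤ ∑ t ∈ Finset.range T, A t := Finset.sum_nonneg fun t _ => hA_nonneg t
  have hfin : (η - L * η ^ 2 / 2) * (∑ t ∈ Finset.range T, A t)
      ≤ (Jstar - J θ₀) + T * (L * η ^ 2 / 2 * σ2) := by
    have h := (htel T le_rfl).trans hJT
    linarith
  have hc : η / 2 ≤ η - L * η ^ 2 / 2 := by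
    have hLη1 : L * η ≤ 1 := by
      rw [hLη]
      rw [div_le_one hs]
      exact hs1
    have hη2 : (0:ℝ) ≤ η / 2 := le_of_lt (half_pos hηpos)
    have h1LE : (0:ℝ) ≤ 1 - L * η := sub_nonneg.2 hLη1
    have h0 : (0:ℝ) ≤ η / 2 * (1 - L * η) := mul_nonneg hη2 h1LE
    have h0' : (0:ℝ) ≤ η / 2 - L * η ^ 2 / 2 := by linear_combination h0
    linarith only [h0']
  have hfin2 : (η / 2) * (∑ t ∈ Finset.range T, A t)
      ≤ (Jstar - J θ₀) + T * (L * η ^ 2 / 2 * σ2) :=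
    le_trans (mul_le_mul_of_nonneg_right hc hS_nonneg) hfin
  -- final arithmetic
  have hgoal : (1 / (T:ℝ)) * (∑ t ∈ Finset.range T, A t)
      ≤ 2 * L * (Jstar - J θ₀) / s + σ2 / s := by
    have hmul := mul_le_mul_of_nonneg_left hfin2 (le_of_lt (by positivity : (0:ℝ) < 2 / (η * T)))
    have hL' : (2 / (η * T)) * ((η / 2) * (∑ t ∈ Finset.range T, A t))
        = (1 / (T:ℝ)) * (∑ t ∈ Finset.range T, A t) := by
      field_simp
    have hTss : (T:ℝ) = s * s := hss.symm
    have hR' : (2 / (η * T)) * ((Jstar - J θ₀) + T * (L * η ^ 2 / 2 * σ2))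
        = 2 * L * (Jstar - J θ₀) / s + σ2 / s := by
      rw [hη, hTss]
      field_simp
    rw [hL', hR'] at hmul
    exact hmul
  exact hgoal
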